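/- If G₁ and G₂ are hereditarily conjugacy separable groups, then the direct product G₁ × G₂ is hereditarily conjugacy separable. -/

import Mathlib

open Pointwise


/-- A group is conjugacy separable if any two non-conjugate elements have non-conjugate images
in some finite quotient. -/
def ConjugacySeparable (G : Type*) [Group G] : Prop :=
  ∀ x y : G, ¬ IsConj x y →
    ∃ (Q : Type) (_ : Group Q) (_ : Finite Q) (φ : G →* Q), ¬ IsConj (φ x) (φ y)

/-- A group is hereditarily conjugacy separable if every finite index subgroup is
conjugacy separable. -/
def HereditarilyConjugacySeparable (G : Type*) [Group G] : Prop :=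
  ∀ H : Subgroup G, H.FiniteIndex → ConjugacySeparable H

lemma exists_sep {G : Type*} [Group G] (hG : HereditarilyConjugacySeparable G)
    (N : Subgroup G) [hNn : N.Normal] [hNf : N.FiniteIndex] (z y : G)
    (h : ∀ n ∈ N, n * z * n⁻¹ ≠ y) :
    ∃ L : Subgroup G, L.Normal ∧ L.FiniteIndex ∧ ∀ n ∈ N, ∀ l ∈ L, n * z * n⁻¹ * l ≠ y := by
  classical
  set D : Subgroup G := N ⊔ Subgroup.zpowers z with hDdef
  have hND : N ≤ D := le_sup_left
  have hzD : z ∈ D := (le_sup_right : Subgroup.zpowers z ≤ D) (Subgroup.mem_zpowers z)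
  have hchar : ∀ d ∈ D, ∃ n ∈ N, ∃ i : ℤ, d = n * z ^ i := by
    intro d hd
    have hd' : d ∈ ((N : Set G) * ((Subgroup.zpowers z : Subgroup G) : Set G)) := by
      rw [← Subgroup.normal_mul]; exact hd
    obtain ⟨n, hn, w, hw, rfl⟩ := hd'
    obtain ⟨i, rfl⟩ := hw
    exact ⟨n, hn, i, rfl⟩
  haveI hDf : D.FiniteIndex := Subgroup.finiteIndex_of_le hND
  by_cases hyD : y ∈ D
  · have hcs : ConjugacySeparable ↥D := hG D hDf
    have hnc : ¬ IsConj (⟨z, hzD⟩ : D) (⟨y, hyD⟩ : D) := by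
      rw [isConj_iff]
      rintro ⟨d, hd⟩
      obtain ⟨n, hn, i, hni⟩ := hchar (d : G) d.2
      apply h n hn
      have : ((d * ⟨z, hzD⟩ * d⁻¹ : D) : G) = y := by rw [hd]
      simp only [Subgroup.coe_mul, Subgroup.coe_inv] at this
      rw [hni] at this
      rw [← this]
      group
    obtain ⟨Q, _, _, φ, hφ⟩ := hcs _ _ hnc
    haveI : Finite φ.range := Subtype.finite
    haveI : φ.ker.FiniteIndex := Subgroup.finiteIndex_ker φ
    have hL0 : (φ.ker.map D.subtype).FiniteIndex := by
      constructor
      rw [Subgroup.index_map_subtype]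
      exact mul_ne_zero Subgroup.FiniteIndex.index_ne_zero Subgroup.FiniteIndex.index_ne_zero
    haveI := hL0
    refine ⟨(φ.ker.map D.subtype).normalCore, inferInstance, inferInstance, ?_⟩
    intro n hn l hl heq
    obtain ⟨l', hl', hll⟩ := Subgroup.normalCore_le _ hl
    apply hφ
    rw [isConj_iff]
    refine ⟨φ ⟨n, hND hn⟩, ?_⟩
    have hyeq : (⟨y, hyD⟩ : D) = ⟨n, hND hn⟩ * ⟨z, hzD⟩ * ⟨n, hND hn⟩⁻¹ * l' := by
      apply Subtype.ext
      simp only [Subgroup.coe_mul, Subgroup.coe_inv]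
      rw [← heq, ← hll]
      rfl
    rw [hyeq, map_mul, map_mul, map_mul, map_inv, MonoidHom.mem_ker.mp hl', mul_one]
  · refine ⟨N, hNn, hNf, ?_⟩
    intro n hn l hl heq
    exact hyD (heq ▸ mul_mem (mul_mem (mul_mem (hND hn) hzD) (inv_mem (hND hn))) (hND hl))

theorem prod_hereditarilyConjugacySeparable {G₁ G₂ : Type*} [Group G₁] [Group G₂]
    (h₁ : HereditarilyConjugacySeparable G₁) (h₂ : HereditarilyConjugacySeparable G₂) :
    HereditarilyConjugacySeparable (G₁ × G₂) := by
  intro H hH x y hxy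
  classical
  haveI := hH
  set K₁ : Subgroup G₁ := H.comap (MonoidHom.inl G₁ G₂) with hK₁
  set K₂ : Subgroup G₂ := H.comap (MonoidHom.inr G₁ G₂) with hK₂
  haveI hK₁f : K₁.FiniteIndex :=
    ⟨by rw [hK₁, Subgroup.index_comap]
        exact (Subgroup.instFiniteIndex_subgroupOf H _).index_ne_zero⟩
  haveI hK₂f : K₂.FiniteIndex :=
    ⟨by rw [hK₂, Subgroup.index_comap]
        exact (Subgroup.instFiniteIndex_subgroupOf H _).index_ne_zero⟩
  set N₁ : Subgroup G₁ := K₁.normalCore with hN₁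
  set N₂ : Subgroup G₂ := K₂.normalCore with hN₂
  set N : Subgroup (G₁ × G₂) := N₁.prod N₂ with hN
  haveI hNnorm : N.Normal := by rw [hN]; infer_instance
  haveI hNf : N.FiniteIndex := by
    constructor
    rw [hN, Subgroup.index_prod]
    exact mul_ne_zero Subgroup.FiniteIndex.index_ne_zero Subgroup.FiniteIndex.index_ne_zero
  have hNH : N ≤ H := by
    rintro ⟨a, b⟩ hab
    obtain ⟨ha, hb⟩ := Subgroup.mem_prod.mp hab
    have ha' : ((a, (1 : G₂)) : G₁ × G₂) ∈ H := K₁.normalCore_le ha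
    have hb' : (((1 : G₁), b) : G₁ × G₂) ∈ H := K₂.normalCore_le hb
    have hm : ((a, (1 : G₂)) : G₁ × G₂) * ((1 : G₁), b) ∈ H := mul_mem ha' hb'
    simpa using hm
  have hxy' : ∀ g ∈ H, g * (x : G₁ × G₂) * g⁻¹ ≠ (y : G₁ × G₂) := by
    intro g hg heq
    exact hxy (isConj_iff.mpr ⟨⟨g, hg⟩, Subtype.ext (by simpa using heq)⟩)
  have key : ∀ c : (G₁ × G₂) ⧸ N, ∃ L : Subgroup (G₁ × G₂), L.Normal ∧ L.FiniteIndex ∧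
      ∀ g ∈ H, (QuotientGroup.mk g : (G₁ × G₂) ⧸ N) = c →
        ∀ l ∈ L, g * (x : G₁ × G₂) * g⁻¹ * l ≠ (y : G₁ × G₂) := by
    intro c
    by_cases hc : ∃ g₀, g₀ ∈ H ∧ (QuotientGroup.mk g₀ : (G₁ × G₂) ⧸ N) = c
    · obtain ⟨g₀, hg₀, rfl⟩ := hc
      set z : G₁ × G₂ := g₀ * (x : G₁ × G₂) * g₀⁻¹ with hz
      have hzN : ∀ m ∈ N, m * z * m⁻¹ ≠ (y : G₁ × G₂) := by
        intro m hm heq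
        refine hxy' (m * g₀) (mul_mem (hNH hm) hg₀) ?_
        rw [← heq, hz]; group
      have hsplit : (∀ a ∈ N₁, a * z.1 * a⁻¹ ≠ (y : G₁ × G₂).1) ∨
          (∀ b ∈ N₂, b * z.2 * b⁻¹ ≠ (y : G₁ × G₂).2) := by
        by_contra hcon
        push_neg at hcon
        obtain ⟨⟨a, ha, hea⟩, ⟨b, hb, heb⟩⟩ := hcon
        exact hzN (a, b) (Subgroup.mem_prod.mpr ⟨ha, hb⟩) (Prod.ext hea heb)
      have hcoset : ∀ g, g ∈ H → (QuotientGroup.mk g : (G₁ × G₂) ⧸ N) = QuotientGroup.mk g₀ →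
          ∃ m ∈ N, g * (x : G₁ × G₂) * g⁻¹ = m * z * m⁻¹ := by
        intro g hg hgc
        have hn : g₀⁻¹ * g ∈ N := by
          have h' := QuotientGroup.eq.mp hgc
          simpa using inv_mem h'
        refine ⟨g₀ * (g₀⁻¹ * g) * g₀⁻¹, hNnorm.conj_mem _ hn g₀, ?_⟩
        rw [hz]; group
      rcases hsplit with hsep | hsep
      · obtain ⟨L₁, hLn, hLf, hLp⟩ := exists_sep h₁ N₁ z.1 (y : G₁ × G₂).1 hsep
        haveI := hLn; haveI := hLf
        refine ⟨L₁.prod ⊤, inferInstance, ?_, ?_⟩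
        · constructor
          rw [Subgroup.index_prod, Subgroup.index_top, mul_one]
          exact hLf.index_ne_zero
        · intro g hg hgc l hl heq
          obtain ⟨m, hmN, hgx⟩ := hcoset g hg hgc
          rw [hgx] at heq
          have h1 := congrArg Prod.fst heq
          simp only [Prod.fst_mul, Prod.fst_inv] at h1
          exact hLp m.1 (Subgroup.mem_prod.mp hmN).1 l.1 (Subgroup.mem_prod.mp hl).1 h1
      · obtain ⟨L₂, hLn, hLf, hLp⟩ := exists_sep h₂ N₂ z.2 (y : G₁ × G₂).2 hsep
        haveI := hLn; haveI := hLf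
        refine ⟨(⊤ : Subgroup G₁).prod L₂, inferInstance, ?_, ?_⟩
        · constructor
          rw [Subgroup.index_prod, Subgroup.index_top, one_mul]
          exact hLf.index_ne_zero
        · intro g hg hgc l hl heq
          obtain ⟨m, hmN, hgx⟩ := hcoset g hg hgc
          rw [hgx] at heq
          have h2 := congrArg Prod.snd heq
          simp only [Prod.snd_mul, Prod.snd_inv] at h2
          exact hLp m.2 (Subgroup.mem_prod.mp hmN).2 l.2 (Subgroup.mem_prod.mp hl).2 h2
    · exact ⟨⊤, inferInstance, inferInstance, fun g hg hgc => absurd ⟨g, hg, hgc⟩ hc⟩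
  choose L hLn hLf hLp using key
  set LL : Subgroup (G₁ × G₂) := ⨅ c, L c with hLL
  have hLLn : LL.Normal := by
    constructor
    intro n hn g
    rw [hLL, Subgroup.mem_iInf] at hn ⊢
    exact fun c => (hLn c).conj_mem n (hn c) g
  haveI hLLf : LL.FiniteIndex := Subgroup.finiteIndex_iInf hLf
  set M : Subgroup ↥H := LL.subgroupOf H with hM
  haveI hMn : M.Normal := Subgroup.Normal.comap hLLn H.subtype
  haveI hMf : M.FiniteIndex := Subgroup.instFiniteIndex_subgroupOf LL H
  obtain ⟨Q, instQ, instF, ⟨e⟩⟩ := Finite.exists_type_univ_nonempty_mulEquiv.{_, 0} (↥H ⧸ M)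
  refine ⟨Q, instQ, inferInstance, e.toMonoidHom.comp (QuotientGroup.mk' M), ?_⟩
  intro hconj0
  have hconj : IsConj (QuotientGroup.mk' M x) (QuotientGroup.mk' M y) := by
    rw [isConj_iff] at hconj0 ⊢
    obtain ⟨q, hq⟩ := hconj0
    refine ⟨e.symm q, ?_⟩
    apply e.injective
    simp only [MonoidHom.comp_apply, MulEquiv.coe_toMonoidHom] at hq
    simp only [map_mul, map_inv, MulEquiv.apply_symm_apply]
    exact hq
  rw [isConj_iff] at hconj
  obtain ⟨q, hq⟩ := hconj
  obtain ⟨g, rfl⟩ := QuotientGroup.mk'_surjective M q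
  rw [← map_mul, ← map_inv, ← map_mul] at hq
  obtain ⟨n, hnM, hny⟩ := (QuotientGroup.mk'_eq_mk' M).mp hq
  have hval : (g : G₁ × G₂) * (x : G₁ × G₂) * (g : G₁ × G₂)⁻¹ * (n : G₁ × G₂) = (y : G₁ × G₂) := by
    have := congrArg (Subtype.val) hny
    simpa using this
  have hnLL : (n : G₁ × G₂) ∈ LL := Subgroup.mem_subgroupOf.mp hnM
  exact hLp (QuotientGroup.mk (g : G₁ × G₂)) (g : G₁ × G₂) g.2 rfl (n : G₁ × G₂)
    (Subgroup.mem_iInf.mp hnLL _) hval
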